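/- Let S and R be finite sets, N a real S×R matrix, W = range(N), W^⊥ = ker(Nᵀ), and fix distinct i, o ∈ S. Then the supremum of the set {u_o : u ∈ W^⊥, and there exist w ∈ W and a strictly positive c̄ ∈ ℝ^S with u − e_i = diag(1/c̄)·w} is at most the supremum of the set {u_o : u is elementary in W^⊥ and u_i = 1} ∪ {0}. -/

import Mathlib

open Matrix

/-- A vector `v` is elementary in a linear subspace `V ⊆ ℝ^S` if `v ∈ V`, `v ≠ 0`, and no
nonzero `v' ∈ V` has support strictly contained in the support of `v`. -/
def IsElementary {S : Type*} (V : Submodule ℝ (S → ℝ)) (v : S → ℝ) : Prop :=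
  v ∈ V ∧ v ≠ 0 ∧ ∀ v' ∈ V, v' ≠ 0 → ¬ Function.support v' ⊂ Function.support v

open Function

section Aux
set_option linter.unusedSectionVars false
variable {S : Type*} [Fintype S]

lemma elem_smul {V : Submodule ℝ (S → ℝ)} {v : S → ℝ} (h : IsElementary V v) {c : ℝ}
    (hc : c ≠ 0) : IsElementary V (c • v) := by
  obtain ⟨hv, hv0, hmin⟩ := h
  refine ⟨V.smul_mem c hv, smul_ne_zero hc hv0, fun v' hv' hv'0 hss => ?_⟩
  exact hmin v' hv' hv'0 (by rwa [Function.support_const_smul_of_ne_zero c v hc] at hss)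

lemma exists_min_elem (V : Submodule ℝ (S → ℝ)) {u : S → ℝ} (hu : u ∈ V) (hu0 : u ≠ 0) :
    ∃ v, IsElementary V v ∧ support v ⊆ support u := by
  classical
  set T : Set ℕ := {n | ∃ v, v ∈ V ∧ v ≠ 0 ∧ support v ⊆ support u ∧ (support v).ncard = n}
    with hTdef
  have hT : (support u).ncard ∈ T := ⟨u, hu, hu0, subset_rfl, rfl⟩
  obtain ⟨v, hvV, hv0, hvs, hvc⟩ := Nat.sInf_mem (⟨_, hT⟩ : T.Nonempty)
  refine ⟨v, ⟨hvV, hv0, fun v' hv' hv'0 hss => ?_⟩, hvs⟩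
  have h1 : (support v').ncard ∈ T := ⟨v', hv', hv'0, hss.subset.trans hvs, rfl⟩
  have h2 := Nat.sInf_le h1
  have h3 : (support v').ncard < (support v).ncard := Set.ncard_lt_ncard hss (Set.toFinite _)
  omega

lemma conf_trans {u u' w : S → ℝ} (h1 : support w ⊆ support u')
    (h2 : ∀ s, 0 ≤ w s * u' s) (h3 : support u' ⊆ support u)
    (h4 : ∀ s, 0 ≤ u' s * u s) (s : S) : 0 ≤ w s * u s := by
  by_cases hw : w s = 0
  · simp [hw]
  · have hs1 : s ∈ support u' := h1 (Function.mem_support.mpr hw)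
    have hs2 : s ∈ support u := h3 hs1
    have hu' : u' s ≠ 0 := hs1
    have hu : u s ≠ 0 := hs2
    have p1 : 0 < w s * u' s := lt_of_le_of_ne (h2 s) (fun h => (mul_ne_zero hw hu') h.symm)
    have p2 : 0 < u' s * u s := lt_of_le_of_ne (h4 s) (fun h => (mul_ne_zero hu' hu) h.symm)
    nlinarith [mul_pos p1 p2, sq_nonneg (u' s)]

lemma exists_elem_conformal (V : Submodule ℝ (S → ℝ)) :
    ∀ n (u : S → ℝ), (support u).ncard = n → u ∈ V → u ≠ 0 →
    ∃ v, IsElementary V v ∧ support v ⊆ support u ∧ ∀ s, 0 ≤ v s * u s := by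
  classical
  intro n
  induction n using Nat.strong_induction_on with
  | _ n ih =>
    intro u hn huV hu0
    obtain ⟨v, hvel, hvs⟩ := exists_min_elem V huV hu0
    have hvV := hvel.1
    have hv0 := hvel.2.1
    by_cases hpos : ∀ s, 0 ≤ v s * u s
    · exact ⟨v, hvel, hvs, hpos⟩
    by_cases hneg : ∀ s, 0 ≤ (-v) s * u s
    · refine ⟨-v, ?_, by simpa using hvs, hneg⟩
      have := elem_smul hvel (c := (-1 : ℝ)) (by norm_num)
      simpa using this
    push_neg at hpos hneg
    obtain ⟨s1, hs1⟩ := hpos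
    obtain ⟨s0, hs0⟩ := hneg
    have hs0' : 0 < v s0 * u s0 := by simpa using hs0
    -- the "bad" set
    set Q : Finset S := Finset.univ.filter (fun s => v s * u s < 0) with hQ
    have hQne : Q.Nonempty := ⟨s1, by simp [hQ, hs1]⟩
    obtain ⟨q, hqQ, hqmin⟩ := Finset.exists_min_image Q (fun s => -(u s / v s)) hQne
    have hqneg : v q * u q < 0 := by simpa [hQ] using hqQ
    have hvq : v q ≠ 0 := fun h => by simp [h] at hqneg
    have huq : u q ≠ 0 := fun h => by simp [h] at hqneg
    set t : ℝ := -(u q / v q) with htdef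
    have ht : 0 < t := by
      have : u q / v q = (v q * u q) / (v q ^ 2) := by field_simp
      rw [htdef, this]
      have : (v q * u q) / (v q ^ 2) < 0 := div_neg_of_neg_of_pos hqneg (by positivity)
      linarith
    set u' : S → ℝ := u + t • v with hu'def
    have hsupz : ∀ s, u s = 0 → u' s = 0 := by
      intro s hs
      have hvz : v s = 0 := by
        by_contra hvz
        exact (Function.mem_support.mp (hvs (Function.mem_support.mpr hvz))) hs
      simp [hu'def, hs, hvz]
    have hconf : ∀ s, 0 ≤ u' s * u s := by
      intro s
      rcases lt_trichotomy (v s * u s) 0 with hlt | heq | hgt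
      · have hvns : v s ≠ 0 := fun h => by simp [h] at hlt
        have hsQ : s ∈ Q := by simp [hQ, hlt]
        have hle : t ≤ -(u s / v s) := hqmin s hsQ
        have hr : (u s / v s) * v s = u s := div_mul_cancel₀ _ hvns
        have hprod : 0 ≤ (-(v s * u s)) * (-((u s / v s) + t)) :=
          mul_nonneg (by linarith) (by linarith)
        have heq2 : u' s * u s = (-(v s * u s)) * (-((u s / v s) + t)) := by
          simp only [hu'def, Pi.add_apply, Pi.smul_apply, smul_eq_mul]
          linear_combination (-(u s)) * hr
        rw [heq2]; exact hprod
      · rcases mul_eq_zero.mp heq with hv | hu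
        · have h5 : u' s = u s := by simp [hu'def, hv]
          rw [h5]; exact mul_self_nonneg _
        · simp [hu]
      · have h5 : u' s * u s = u s * u s + t * (v s * u s) := by
          simp only [hu'def, Pi.add_apply, Pi.smul_apply, smul_eq_mul]; ring
        rw [h5]
        nlinarith [sq_nonneg (u s), mul_pos ht hgt]
    have hq0 : u' q = 0 := by
      simp only [hu'def, Pi.add_apply, Pi.smul_apply, smul_eq_mul, htdef]
      field_simp
      ring
    have hss : support u' ⊂ support u := by
      constructor
      · intro s hs
        by_contra h
        exact (Function.mem_support.mp hs) (hsupz s (Function.notMem_support.mp h))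
      · intro h
        exact (h (Function.mem_support.mpr huq) : u' q ≠ 0) hq0
    have hu'0 : u' ≠ 0 := by
      have : 0 < u' s0 * u s0 := by
        have : u' s0 * u s0 = u s0 * u s0 + t * (v s0 * u s0) := by
          simp only [hu'def, Pi.add_apply, Pi.smul_apply, smul_eq_mul]; ring
        rw [this]
        nlinarith [sq_nonneg (u s0), mul_pos ht hs0']
      intro h
      rw [h] at this
      simp at this
    have hcard : (support u').ncard < n := by
      rw [← hn]
      exact Set.ncard_lt_ncard hss (Set.toFinite _)
    obtain ⟨w, hwel, hws, hwconf⟩ :=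
      ih _ hcard u' rfl (V.add_mem huV (V.smul_mem t hvV)) hu'0
    exact ⟨w, hwel, hws.trans hss.subset, conf_trans hws hwconf hss.subset hconf⟩

lemma exists_decomp (V : Submodule ℝ (S → ℝ)) :
    ∀ n (u : S → ℝ), (support u).ncard = n → u ∈ V →
    ∃ (m : ℕ) (f : Fin m → (S → ℝ)),
      (∀ k, IsElementary V (f k) ∧ support (f k) ⊆ support u ∧ ∀ s, 0 ≤ f k s * u s) ∧
      u = ∑ k, f k := by
  classical
  intro n
  induction n using Nat.strong_induction_on with
  | _ n ih =>
    intro u hn huV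
    by_cases hu0 : u = 0
    · exact ⟨0, Fin.elim0, fun k => k.elim0, by simp [hu0]⟩
    obtain ⟨v, hvel, hvs, hvconf⟩ := exists_elem_conformal V n u hn huV hu0
    have hvV := hvel.1
    have hv0 := hvel.2.1
    set P : Finset S := Finset.univ.filter (fun s => v s ≠ 0) with hP
    have hPne : P.Nonempty := by
      obtain ⟨s, hs⟩ := Function.ne_iff.mp hv0
      have hs' : v s ≠ 0 := by simpa using hs
      exact ⟨s, by simp [hP, hs']⟩
    obtain ⟨q, hqP, hqmin⟩ := Finset.exists_min_image P (fun s => u s / v s) hPne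
    have hvq : v q ≠ 0 := by simpa [hP] using hqP
    have huq : u q ≠ 0 := Function.mem_support.mp (hvs (Function.mem_support.mpr hvq))
    have hqpos : 0 < v q * u q := lt_of_le_of_ne (hvconf q) (fun h => (mul_ne_zero hvq huq) h.symm)
    set t : ℝ := u q / v q with htdef
    have ht : 0 < t := by
      have h1 : u q / v q = (v q * u q) / (v q ^ 2) := by field_simp
      rw [htdef, h1]
      exact div_pos hqpos (by positivity)
    set u' : S → ℝ := u - t • v with hu'def
    have hsupz : ∀ s, u s = 0 → u' s = 0 := by
      intro s hs
      have hvz : v s = 0 := by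
        by_contra hvz
        exact (Function.mem_support.mp (hvs (Function.mem_support.mpr hvz))) hs
      simp [hu'def, hs, hvz]
    have hconf : ∀ s, 0 ≤ u' s * u s := by
      intro s
      by_cases hvz : v s = 0
      · have h5 : u' s = u s := by simp [hu'def, hvz]
        rw [h5]; exact mul_self_nonneg _
      · have hus : u s ≠ 0 := Function.mem_support.mp (hvs (Function.mem_support.mpr hvz))
        have hspos : 0 < v s * u s :=
          lt_of_le_of_ne (hvconf s) (fun h => (mul_ne_zero hvz hus) h.symm)
        have hsP : s ∈ P := by simp [hP, hvz]
        have hle : t ≤ u s / v s := hqmin s hsP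
        have hr : (u s / v s) * v s = u s := div_mul_cancel₀ _ hvz
        have hprod : 0 ≤ (v s * u s) * ((u s / v s) - t) :=
          mul_nonneg (le_of_lt hspos) (by linarith)
        have heq2 : u' s * u s = (v s * u s) * ((u s / v s) - t) := by
          simp only [hu'def, Pi.sub_apply, Pi.smul_apply, smul_eq_mul]
          linear_combination (-(u s)) * hr
        rw [heq2]; exact hprod
    have hq0 : u' q = 0 := by
      simp only [hu'def, Pi.sub_apply, Pi.smul_apply, smul_eq_mul, htdef]
      field_simp
      ring
    have hss : support u' ⊂ support u := by
      constructor
      · intro s hs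
        by_contra h
        exact (Function.mem_support.mp hs) (hsupz s (Function.notMem_support.mp h))
      · intro h
        exact (h (Function.mem_support.mpr huq) : u' q ≠ 0) hq0
    have hcard : (support u').ncard < n := by
      rw [← hn]
      exact Set.ncard_lt_ncard hss (Set.toFinite _)
    have hu'V : u' ∈ V := V.sub_mem huV (V.smul_mem t hvV)
    obtain ⟨m, f, hf, hsum⟩ := ih _ hcard u' rfl hu'V
    refine ⟨m + 1, Fin.cons (t • v) f, ?_, ?_⟩
    · intro k
      refine Fin.cases ?_ ?_ k
      · refine ⟨elem_smul hvel (ne_of_gt ht), ?_, ?_⟩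
        · rw [Fin.cons_zero, Function.support_const_smul_of_ne_zero t v (ne_of_gt ht)]
          exact hvs
        · intro s
          rw [Fin.cons_zero]
          have : (t • v) s * u s = t * (v s * u s) := by
            simp only [Pi.smul_apply, smul_eq_mul]; ring
          rw [this]
          exact mul_nonneg (le_of_lt ht) (hvconf s)
      · intro j
        rw [Fin.cons_succ]
        obtain ⟨h1, h2, h3⟩ := hf j
        exact ⟨h1, h2.trans hss.subset, conf_trans h2 h3 hss.subset hconf⟩
    · rw [Fin.sum_cons, ← hsum]
      simp [hu'def]

lemma elem_ext (V : Submodule ℝ (S → ℝ)) (i : S) {u u' : S → ℝ}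
    (hu : IsElementary V u) (hu' : IsElementary V u') (hi : u i = 1) (hi' : u' i = 1)
    (hsupp : support u = support u') : u = u' := by
  by_contra hne
  have hd : u - u' ∈ V := V.sub_mem hu.1 hu'.1
  have hd0 : u - u' ≠ 0 := fun h => hne (sub_eq_zero.mp h)
  apply hu.2.2 (u - u') hd hd0
  constructor
  · intro s hs
    by_contra h
    have h1 : u s = 0 := Function.notMem_support.mp h
    have h2 : u' s = 0 := Function.notMem_support.mp (hsupp ▸ h)
    exact (Function.mem_support.mp hs) (by simp [h1, h2])
  · intro h
    have hiu : i ∈ support u := Function.mem_support.mpr (by rw [hi]; norm_num)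
    have h3 := h hiu
    exact (Function.mem_support.mp h3) (by simp [hi, hi'])

lemma elem_set_finite (V : Submodule ℝ (S → ℝ)) (i : S) :
    {u : S → ℝ | IsElementary V u ∧ u i = 1}.Finite := by
  apply Set.Finite.of_finite_image (f := Function.support)
  · exact Set.toFinite _
  · intro u hu u' hu' h
    exact elem_ext V i hu.1 hu'.1 hu.2 hu'.2 h

end Aux

/-- Lemma 3.6 (`lem:o_u`): the supremum of achievable values `u_o` is at most the supremum of
`u_o` over elementary vectors `u ∈ W^⊥` with `u_i = 1` (together with `0`). -/
theorem sup_le_sup_elementary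
    {S R : Type*} [Fintype S] [Fintype R] [DecidableEq S]
    (N : Matrix S R ℝ) (i o : S) (hio : i ≠ o) :
    sSup {x : ℝ | ∃ u w cbar : S → ℝ,
        u ∈ LinearMap.ker Nᵀ.mulVecLin ∧
        w ∈ LinearMap.range N.mulVecLin ∧
        (∀ s, 0 < cbar s) ∧
        (u - Pi.single i 1 = fun s => w s / cbar s) ∧
        x = u o} ≤
    sSup ({x : ℝ | ∃ u : S → ℝ,
        IsElementary (LinearMap.ker Nᵀ.mulVecLin) u ∧ u i = 1 ∧ x = u o} ∪ {0}) := by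

  classical
  set V := LinearMap.ker Nᵀ.mulVecLin with hV
  set B := ({x : ℝ | ∃ u : S → ℝ, IsElementary V u ∧ u i = 1 ∧ x = u o} ∪ {0} : Set ℝ) with hB
  have hBfin : B.Finite := by
    apply Set.Finite.union _ (Set.finite_singleton 0)
    have h1 : {x : ℝ | ∃ u : S → ℝ, IsElementary V u ∧ u i = 1 ∧ x = u o}
        = (fun u : S → ℝ => u o) '' {u | IsElementary V u ∧ u i = 1} := by
      ext x
      simp only [Set.mem_setOf_eq, Set.mem_image]
      constructor
      · rintro ⟨u, h1, h2, rfl⟩; exact ⟨u, ⟨h1, h2⟩, rfl⟩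
      · rintro ⟨u, ⟨h1, h2⟩, rfl⟩; exact ⟨u, h1, h2, rfl⟩
    rw [h1]
    exact (elem_set_finite V i).image _
  have hBdd : BddAbove B := hBfin.bddAbove
  have h0B : (0:ℝ) ∈ B := Or.inr rfl
  have hM0 : 0 ≤ sSup B := le_csSup hBdd h0B
  apply Real.sSup_le _ hM0
  rintro x ⟨u, w, cbar, huV, hwW, hc, heq, rfl⟩
  have hw : ∀ s, w s = cbar s * u s - cbar s * (Pi.single i 1 : S → ℝ) s := by
    intro s
    have h1 := congrFun heq s
    simp only [Pi.sub_apply] at h1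
    have h2 : w s = (u s - (Pi.single i 1 : S → ℝ) s) * cbar s :=
      (div_eq_iff (ne_of_gt (hc s))).mp h1.symm
    rw [h2]; ring
  have horth : ∀ v ∈ V, ∑ s, v s * w s = 0 := by
    intro v hv
    obtain ⟨y, hy⟩ := hwW
    have hv' : Nᵀ.mulVec v = 0 := by
      have := LinearMap.mem_ker.mp hv
      rwa [Matrix.mulVecLin_apply] at this
    calc ∑ s, v s * w s = v ⬝ᵥ w := rfl
      _ = v ⬝ᵥ N.mulVec y := by rw [← hy, Matrix.mulVecLin_apply]
      _ = Matrix.vecMul v N ⬝ᵥ y := Matrix.dotProduct_mulVec v N y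
      _ = Nᵀ.mulVec v ⬝ᵥ y := by rw [Matrix.mulVec_transpose]
      _ = 0 := by rw [hv']; simp [dotProduct]
  have key : ∀ v ∈ V, ∑ s, cbar s * (v s * u s) = cbar i * v i := by
    intro v hv
    have h0 := horth v hv
    have hsum : ∑ s, v s * w s
        = (∑ s, cbar s * (v s * u s)) - (∑ s, cbar s * (Pi.single i 1 : S → ℝ) s * v s) := by
      rw [← Finset.sum_sub_distrib]
      apply Finset.sum_congr rfl
      intro s _
      rw [hw s]; ring
    have hsingle : ∑ s, cbar s * (Pi.single i 1 : S → ℝ) s * v s = cbar i * v i := by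
      simp only [Pi.single_apply, mul_ite, mul_one, mul_zero, ite_mul, zero_mul]
      rw [Finset.sum_ite_eq' Finset.univ i (fun s => cbar s * v s)]
      simp
    rw [hsum, hsingle] at h0
    linarith
  have hself := key u huV
  have hterm : ∀ s, 0 ≤ cbar s * (u s * u s) :=
    fun s => mul_nonneg (le_of_lt (hc s)) (mul_self_nonneg _)
  have hii : cbar i * (u i * u i) ≤ cbar i * u i := by
    rw [← hself]
    exact Finset.single_le_sum (fun s _ => hterm s) (Finset.mem_univ i)
  have h6 : u i * u i ≤ u i := (mul_le_mul_iff_right₀ (hc i)).mp hii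
  have hui1 : u i ≤ 1 := by nlinarith [h6, sq_nonneg (u i - 1)]
  obtain ⟨m, f, hf, hsum⟩ := exists_decomp V _ u rfl huV
  have hki : ∀ k, 0 < f k i := by
    intro k
    have hkey := key (f k) (hf k).1.1
    have hterm' : ∀ s, 0 ≤ cbar s * (f k s * u s) :=
      fun s => mul_nonneg (le_of_lt (hc s)) ((hf k).2.2 s)
    have hge : 0 ≤ cbar i * f k i := hkey ▸ Finset.sum_nonneg (fun s _ => hterm' s)
    have h1 : 0 ≤ f k i := by nlinarith [hc i]
    rcases h1.lt_or_eq with h | h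
    · exact h
    · exfalso
      have hzero : ∑ s, cbar s * (f k s * u s) = 0 := by rw [hkey, ← h]; ring
      have hall := (Finset.sum_eq_zero_iff_of_nonneg (fun s _ => hterm' s)).mp hzero
      obtain ⟨s, hs⟩ := Function.ne_iff.mp (hf k).1.2.1
      have hfs : f k s ≠ 0 := by simpa using hs
      have hus : u s ≠ 0 :=
        Function.mem_support.mp ((hf k).2.1 (Function.mem_support.mpr hfs))
      have h3 := hall s (Finset.mem_univ s)
      have h4 : f k s * u s = 0 := by
        rcases mul_eq_zero.mp h3 with h' | h'
        · exact absurd h' (ne_of_gt (hc s))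
        · exact h'
      exact (mul_ne_zero hfs hus) h4
  have hko : ∀ k, f k o ≤ f k i * sSup B := by
    intro k
    set g := (f k i)⁻¹ • f k with hg
    have hgel : IsElementary V g := elem_smul (hf k).1 (inv_ne_zero (ne_of_gt (hki k)))
    have hgi : g i = 1 := by
      simp only [hg, Pi.smul_apply, smul_eq_mul]
      exact inv_mul_cancel₀ (ne_of_gt (hki k))
    have hgoB : g o ∈ B := Or.inl ⟨g, hgel, hgi, rfl⟩
    have hgo : g o ≤ sSup B := le_csSup hBdd hgoB
    have h5 : f k o = f k i * g o := by
      simp only [hg, Pi.smul_apply, smul_eq_mul]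
      rw [← mul_assoc, mul_inv_cancel₀ (ne_of_gt (hki k)), one_mul]
    rw [h5]
    exact mul_le_mul_of_nonneg_left hgo (le_of_lt (hki k))
  have huo : u o = ∑ k, f k o := by rw [hsum]; simp
  have hui : u i = ∑ k, f k i := by rw [hsum]; simp
  calc u o = ∑ k, f k o := huo
    _ ≤ ∑ k, f k i * sSup B := Finset.sum_le_sum (fun k _ => hko k)
    _ = u i * sSup B := by rw [hui, ← Finset.sum_mul]
    _ ≤ 1 * sSup B := mul_le_mul_of_nonneg_right hui1 hM0
    _ = sSup B := one_mul _
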